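/- Let 1 < α < 2, set ν = (α-1)/(2-α) and κ = (2-α)/2, assume ν ∉ ℕ, and let λ > 0 with c = (2/(2-α))√λ. Define Φ₋ : (0,1) → ℝ by Φ₋(x) = x^{(1-α)/2} J_{-ν}(c x^{κ}), where J_{-ν} is the Bessel function of the first kind of order -ν. Then ∫_0^1 x^α Φ₋'(x)² dx = +∞, i.e. the second fundamental solution of the degenerate Sturm–Liouville equation does not have square-integrable weighted derivative; hence Φ₋ does not belong to H¹_α. -/

import Mathlib

open MeasureTheory Set Filter

/-- The Bessel function of the first kind of (real) order `ν`, defined by its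
ascending power series; with `ν` replaced by `-ν` (non-integer) this is `J_{-ν}`. -/
noncomputable def besselJ (ν : ℝ) (y : ℝ) : ℝ :=
  ∑' m : ℕ, ((-1 : ℝ) ^ m / (m.factorial * Real.Gamma ((m : ℝ) + ν + 1))) *
    (y / 2) ^ (2 * (m : ℝ) + ν)

/-- Coefficients of the auxiliary entire power series `g(u) = ∑ bₘ uᵐ` with
`J_{-ν}(y) = (y/2)^{-ν} g((y/2)²)`. -/
noncomputable def besselCoef (ν : ℝ) (m : ℕ) : ℝ :=
  (-1 : ℝ) ^ m / (m.factorial * Real.Gamma ((m : ℝ) - ν + 1))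

/-- The auxiliary entire function `g`. -/
noncomputable def besselG (ν : ℝ) : ℝ → ℝ :=
  (FormalMultilinearSeries.ofScalars ℝ (besselCoef ν)).sum

lemma besselGamma_ne_zero {ν : ℝ} (hνnat : ∀ n : ℕ, ν ≠ n) (m : ℕ) :
    Real.Gamma ((m : ℝ) - ν + 1) ≠ 0 := by
  refine Real.Gamma_ne_zero fun n hn => ?_
  have : ν = ((m + n + 1 : ℕ) : ℝ) := by push_cast; linarith
  exact hνnat (m + n + 1) this

lemma besselCoef_ne_zero {ν : ℝ} (hνnat : ∀ n : ℕ, ν ≠ n) (m : ℕ) :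
    besselCoef ν m ≠ 0 := by
  refine div_ne_zero (pow_ne_zero _ (by norm_num)) (mul_ne_zero ?_ (besselGamma_ne_zero hνnat m))
  exact_mod_cast m.factorial_ne_zero

lemma besselCoef_succ_abs {ν : ℝ} (hνnat : ∀ n : ℕ, ν ≠ n) (m : ℕ) :
    |besselCoef ν (m + 1)| =
      |besselCoef ν m| / (((m : ℝ) + 1) * |(m : ℝ) - ν + 1|) := by
  have hne : (m : ℝ) - ν + 1 ≠ 0 := by
    intro h
    exact hνnat (m + 1) (by push_cast; linarith)
  have hG : Real.Gamma (((m + 1 : ℕ) : ℝ) - ν + 1) =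
      ((m : ℝ) - ν + 1) * Real.Gamma ((m : ℝ) - ν + 1) := by
    have : (((m + 1 : ℕ) : ℝ) - ν + 1) = ((m : ℝ) - ν + 1) + 1 := by push_cast; ring
    rw [this, Real.Gamma_add_one hne]
  have hfac : ((m + 1).factorial : ℝ) = ((m : ℝ) + 1) * (m.factorial : ℝ) := by
    rw [Nat.factorial_succ]; push_cast; ring
  have hGne := besselGamma_ne_zero hνnat m
  have hfne : (m.factorial : ℝ) ≠ 0 := by exact_mod_cast m.factorial_ne_zero
  have habs : ∀ k : ℕ, |besselCoef ν k| =
      1 / (k.factorial * |Real.Gamma ((k : ℝ) - ν + 1)|) := by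
    intro k
    rw [besselCoef, abs_div, abs_pow, abs_neg, abs_one, one_pow, abs_mul, Nat.abs_cast]
  rw [habs, habs, hG, hfac, abs_mul]
  have hGabs : |Real.Gamma ((m : ℝ) - ν + 1)| ≠ 0 := abs_ne_zero.mpr hGne
  have hane : |(m : ℝ) - ν + 1| ≠ 0 := abs_ne_zero.mpr hne
  have hm1 : ((m : ℝ) + 1) ≠ 0 := by positivity
  field_simp

lemma besselCoef_ratio_tendsto {ν : ℝ} (hνnat : ∀ n : ℕ, ν ≠ n) :
    Tendsto (fun m : ℕ => ‖besselCoef ν (m + 1)‖ / ‖besselCoef ν m‖) atTop (nhds 0) := by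
  have heq : ∀ m : ℕ, ‖besselCoef ν (m + 1)‖ / ‖besselCoef ν m‖ =
      1 / (((m : ℝ) + 1) * |(m : ℝ) - ν + 1|) := by
    intro m
    have h := abs_ne_zero.mpr (besselCoef_ne_zero hνnat m)
    rw [Real.norm_eq_abs, Real.norm_eq_abs, besselCoef_succ_abs hνnat m, div_div,
      mul_comm _ |besselCoef ν m|, ← div_div, div_self h]
  rw [funext heq]
  apply squeeze_zero' (g := fun m : ℕ => 1 / ((m : ℝ) + 1))
  · exact Eventually.of_forall fun m => by positivity
  · filter_upwards [eventually_ge_atTop ⌈ν⌉₊] with m hm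
    have hν : ν ≤ (m : ℝ) := le_trans (Nat.le_ceil ν) (by exact_mod_cast hm)
    have habs : (1 : ℝ) ≤ |(m : ℝ) - ν + 1| := by
      rw [abs_of_pos (by linarith)]; linarith
    apply one_div_le_one_div_of_le (by positivity)
    calc (m : ℝ) + 1 = ((m : ℝ) + 1) * 1 := by ring
      _ ≤ ((m : ℝ) + 1) * |(m : ℝ) - ν + 1| := by
          apply mul_le_mul_of_nonneg_left habs (by positivity)
  · exact tendsto_one_div_add_atTop_nhds_zero_nat

lemma besselG_radius {ν : ℝ} (hνnat : ∀ n : ℕ, ν ≠ n) :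
    (FormalMultilinearSeries.ofScalars ℝ (besselCoef ν)).radius = ⊤ :=
  FormalMultilinearSeries.ofScalars_radius_eq_top_of_tendsto ℝ _
    (Eventually.of_forall (besselCoef_ne_zero hνnat)) (besselCoef_ratio_tendsto hνnat)

lemma besselG_analyticAt {ν : ℝ} (hνnat : ∀ n : ℕ, ν ≠ n) (u : ℝ) :
    AnalyticAt ℝ (besselG ν) u := by
  have hball := (FormalMultilinearSeries.ofScalars ℝ (besselCoef ν)).hasFPowerSeriesOnBall
    (by rw [besselG_radius hνnat]; exact ENNReal.zero_lt_top)
  exact hball.analyticOnNhd u (by rw [besselG_radius hνnat]; exact edist_lt_top _ _)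

lemma besselG_eq (ν : ℝ) (u : ℝ) :
    besselG ν u = ∑' m : ℕ, besselCoef ν m * u ^ m := by
  have := FormalMultilinearSeries.ofScalars_sum_eq (E := ℝ) (besselCoef ν) u
  simpa [besselG, FormalMultilinearSeries.ofScalarsSum, smul_eq_mul] using this

lemma besselG_zero {ν : ℝ} : besselG ν 0 = besselCoef ν 0 := by
  rw [besselG_eq]
  rw [tsum_eq_single 0 (fun m hm => by simp [zero_pow hm])]
  simp

lemma besselJ_neg_eq {ν : ℝ} {y : ℝ} (hy : 0 < y) :
    besselJ (-ν) y = besselG ν ((y / 2) ^ 2) * (y / 2) ^ (-ν : ℝ) := by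
  rw [besselJ, besselG_eq, ← tsum_mul_right]
  apply tsum_congr
  intro m
  have h2 : (0 : ℝ) < y / 2 := by positivity
  have hG : ((m : ℝ) + -ν + 1) = ((m : ℝ) - ν + 1) := by ring
  have hpow : (y / 2) ^ (2 * (m : ℝ) + -ν) = ((y / 2) ^ 2) ^ m * (y / 2) ^ (-ν : ℝ) := by
    rw [Real.rpow_add h2]
    congr 1
    have h2m : (2 * (m : ℝ)) = ((2 * m : ℕ) : ℝ) := by push_cast; ring
    rw [h2m, Real.rpow_natCast, pow_mul]
  rw [hG, hpow, besselCoef]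
  ring

/-- For `1 < α < 2`, `ν = (α-1)/(2-α) ∉ ℕ`, `κ = (2-α)/2`,
`λ > 0` and `c = (2/(2-α))√λ`, the second fundamental solution
`Φ₋(x) = x^{(1-α)/2} J_{-ν}(c x^κ)` of the degenerate Sturm–Liouville equation
has `∫_0^1 x^α Φ₋'(x)² dx = +∞`; in particular the weighted derivative is not
square-integrable, so `Φ₋ ∉ H¹_α`. -/
theorem stmt7 (α ν κ lam c : ℝ) (hα1 : 1 < α) (hα2 : α < 2)
    (hν : ν = (α - 1) / (2 - α)) (hκ : κ = (2 - α) / 2)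
    (hνnat : ∀ n : ℕ, ν ≠ n)
    (hlam : 0 < lam) (hc : c = 2 / (2 - α) * Real.sqrt lam)
    (Φm : ℝ → ℝ)
    (hΦm : ∀ x ∈ Ioo (0 : ℝ) 1,
      Φm x = x ^ ((1 - α) / 2) * besselJ (-ν) (c * x ^ κ)) :
    (∫⁻ x in Ioo (0 : ℝ) 1, ENNReal.ofReal (x ^ α * (deriv Φm x) ^ 2)) = ⊤ ∧
    ¬ IntegrableOn (fun x => x ^ α * (deriv Φm x) ^ 2) (Ioo (0 : ℝ) 1) volume := by
  have h2α : (0 : ℝ) < 2 - α := by linarith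
  have hc0 : 0 < c := by
    rw [hc]
    exact mul_pos (div_pos two_pos h2α) (Real.sqrt_pos.2 hlam)
  have hc2 : (0 : ℝ) < c / 2 := by positivity
  set g : ℝ → ℝ := besselG ν with hg
  set A : ℝ := (c / 2) ^ (-ν : ℝ) with hA
  set bb : ℝ := (c / 2) ^ 2 with hbb
  have hA0 : 0 < A := Real.rpow_pos_of_pos hc2 _
  have hbb0 : 0 < bb := by positivity
  -- the closed form of Φm on (0,1)
  have hform : ∀ x ∈ Ioo (0 : ℝ) 1,
      Φm x = A * (x ^ ((1 : ℝ) - α) * g (bb * x ^ ((2 : ℝ) - α))) := by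
    intro x hx
    have hx0 : 0 < x := hx.1
    have hxκ : 0 < x ^ κ := Real.rpow_pos_of_pos hx0 _
    have hy : 0 < c * x ^ κ := mul_pos hc0 hxκ
    rw [hΦm x hx, besselJ_neg_eq hy]
    have e1 : c * x ^ κ / 2 = (c / 2) * x ^ κ := by ring
    rw [e1]
    have e2 : ((c / 2) * x ^ κ) ^ 2 = bb * x ^ ((2 : ℝ) - α) := by
      rw [mul_pow, hbb]
      congr 1
      rw [← Real.rpow_natCast (x ^ κ) 2, ← Real.rpow_mul hx0.le]
      congr 1
      rw [hκ]; push_cast; ring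
    have e3 : ((c / 2) * x ^ κ) ^ (-ν : ℝ) = A * x ^ (κ * (-ν)) := by
      rw [Real.mul_rpow hc2.le hxκ.le, ← Real.rpow_mul hx0.le]
    have e4 : x ^ ((1 - α) / 2) * x ^ (κ * (-ν)) = x ^ ((1 : ℝ) - α) := by
      rw [← Real.rpow_add hx0]
      congr 1
      rw [hκ, hν]
      field_simp
      ring
    rw [e2, e3, ← e4]
    ring
  -- the derivative on (0,1)
  set Bf : ℝ → ℝ := fun x => (1 - α) * g (bb * x ^ ((2 : ℝ) - α)) +
      deriv g (bb * x ^ ((2 : ℝ) - α)) * (bb * (2 - α)) * x ^ ((2 : ℝ) - α) with hBf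
  have hderiv : ∀ x ∈ Ioo (0 : ℝ) 1,
      deriv Φm x = A * x ^ (-α) * Bf x := by
    intro x hx
    have hx0 : 0 < x := hx.1
    have hEq : Φm =ᶠ[nhds x] fun x => A * (x ^ ((1 : ℝ) - α) * g (bb * x ^ ((2 : ℝ) - α))) :=
      eventually_of_mem (isOpen_Ioo.mem_nhds hx) hform
    rw [hEq.deriv_eq]
    have h1 : HasDerivAt (fun x : ℝ => x ^ ((1 : ℝ) - α)) ((1 - α) * x ^ ((1 : ℝ) - α - 1)) x :=
      Real.hasDerivAt_rpow_const (Or.inl hx0.ne')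
    have h2 : HasDerivAt (fun x : ℝ => x ^ ((2 : ℝ) - α)) ((2 - α) * x ^ ((2 : ℝ) - α - 1)) x :=
      Real.hasDerivAt_rpow_const (Or.inl hx0.ne')
    have h2' : HasDerivAt (fun x : ℝ => bb * x ^ ((2 : ℝ) - α))
        (bb * ((2 - α) * x ^ ((2 : ℝ) - α - 1))) x := h2.const_mul bb
    have hgd : HasDerivAt g (deriv g (bb * x ^ ((2 : ℝ) - α))) (bb * x ^ ((2 : ℝ) - α)) :=
      ((besselG_analyticAt hνnat _).differentiableAt).hasDerivAt
    have h3 : HasDerivAt (fun x : ℝ => g (bb * x ^ ((2 : ℝ) - α)))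
        (deriv g (bb * x ^ ((2 : ℝ) - α)) * (bb * ((2 - α) * x ^ ((2 : ℝ) - α - 1)))) x :=
      hgd.comp x h2'
    have h4 : HasDerivAt (fun x : ℝ => A * (x ^ ((1 : ℝ) - α) * g (bb * x ^ ((2 : ℝ) - α)))) _ x :=
      (h1.mul h3).const_mul A
    rw [h4.deriv]
    have e1 : (1 : ℝ) - α - 1 = -α := by ring
    have e2 : (2 : ℝ) - α - 1 = 1 - α := by ring
    rw [e1, e2, hBf]
    have E : x ^ ((1 : ℝ) - α) * x ^ ((1 : ℝ) - α) = x ^ (-α) * x ^ ((2 : ℝ) - α) := by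
      rw [← Real.rpow_add hx0, ← Real.rpow_add hx0]
      congr 1
      ring
    linear_combination (A * deriv g (bb * x ^ ((2 : ℝ) - α)) * bb * (2 - α)) * E
  -- the limit of Bf at 0⁺
  set L : ℝ := (1 - α) * g 0 with hL
  have hgne : g 0 ≠ 0 := by
    rw [hg, besselG_zero]
    exact besselCoef_ne_zero hνnat 0
  have hLne : L ≠ 0 := mul_ne_zero (by intro h; rw [sub_eq_zero] at h; linarith) hgne
  have hu : Tendsto (fun x : ℝ => bb * x ^ ((2 : ℝ) - α)) (nhdsWithin 0 (Ioi 0)) (nhds 0) := by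
    have h1 : Tendsto (fun x : ℝ => x ^ ((2 : ℝ) - α)) (nhds 0) (nhds 0) := by
      have := (Real.continuousAt_rpow_const 0 (2 - α) (Or.inr h2α.le)).tendsto
      rwa [Real.zero_rpow h2α.ne'] at this
    have h2 : Tendsto (fun x : ℝ => bb * x ^ ((2 : ℝ) - α)) (nhds 0) (nhds (bb * 0)) :=
      h1.const_mul bb
    have h3 := h2.mono_left (nhdsWithin_le_nhds (s := Ioi (0 : ℝ)))
    simpa using h3
  have hx2α : Tendsto (fun x : ℝ => x ^ ((2 : ℝ) - α)) (nhdsWithin 0 (Ioi 0)) (nhds 0) := by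
    have h1 : Tendsto (fun x : ℝ => x ^ ((2 : ℝ) - α)) (nhds 0) (nhds 0) := by
      have := (Real.continuousAt_rpow_const 0 (2 - α) (Or.inr h2α.le)).tendsto
      rwa [Real.zero_rpow h2α.ne'] at this
    exact h1.mono_left nhdsWithin_le_nhds
  have hBtend : Tendsto Bf (nhdsWithin 0 (Ioi 0)) (nhds L) := by
    have hgc : ContinuousAt g 0 := (besselG_analyticAt hνnat 0).continuousAt
    have hga : AnalyticOnNhd ℝ g univ := fun u _ => besselG_analyticAt hνnat u
    have hg'a : AnalyticOnNhd ℝ (deriv g) univ := hga.deriv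
    have hg'c : ContinuousAt (deriv g) 0 := (hg'a 0 (mem_univ 0)).continuousAt
    have h1 : Tendsto (fun x : ℝ => (1 - α) * g (bb * x ^ ((2 : ℝ) - α)))
        (nhdsWithin 0 (Ioi 0)) (nhds ((1 - α) * g 0)) :=
      (hgc.tendsto.comp hu).const_mul _
    have h2 : Tendsto (fun x : ℝ =>
        deriv g (bb * x ^ ((2 : ℝ) - α)) * (bb * (2 - α)) * x ^ ((2 : ℝ) - α))
        (nhdsWithin 0 (Ioi 0)) (nhds (deriv g 0 * (bb * (2 - α)) * 0)) :=
      ((hg'c.tendsto.comp hu).mul_const _).mul hx2α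
    have := h1.add h2
    rw [mul_zero, add_zero] at this
    exact this
  -- eventually |Bf x| > |L|/2 on (0, δ)
  have hev : ∀ᶠ x in nhdsWithin 0 (Ioi 0), |L| / 2 < |Bf x| := by
    have hopen : IsOpen {y : ℝ | |L| / 2 < |y|} := isOpen_lt continuous_const continuous_abs
    have hmem : L ∈ {y : ℝ | |L| / 2 < |y|} := half_lt_self (abs_pos.2 hLne)
    exact hBtend.eventually (hopen.eventually_mem hmem)
  rw [eventually_iff, mem_nhdsGT_iff_exists_Ioo_subset] at hev
  obtain ⟨δ, hδ, hsub⟩ := hev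
  have hδ0 : (0 : ℝ) < δ := hδ
  set δ' : ℝ := min δ 1 with hδ'
  have hδ'0 : 0 < δ' := lt_min hδ0 zero_lt_one
  set CC : ℝ := A ^ 2 * (|L| / 2) ^ 2 with hCC
  have hCC0 : 0 < CC := by
    apply mul_pos (pow_pos hA0 2)
    have : 0 < |L| / 2 := by positivity
    positivity
  -- pointwise lower bound on Ioo 0 δ'
  have hbound : ∀ x ∈ Ioo (0 : ℝ) δ', CC * x ^ (-α) ≤ x ^ α * (deriv Φm x) ^ 2 := by
    intro x hx
    have hx0 : 0 < x := hx.1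
    have hx1 : x ∈ Ioo (0 : ℝ) 1 := ⟨hx0, lt_of_lt_of_le hx.2 (min_le_right δ 1)⟩
    have hxδ : x ∈ Ioo (0 : ℝ) δ := ⟨hx0, lt_of_lt_of_le hx.2 (min_le_left δ 1)⟩
    have hBx : |L| / 2 < |Bf x| := hsub hxδ
    rw [hderiv x hx1]
    have ex : x ^ α * (x ^ (-α) * x ^ (-α)) = x ^ (-α) := by
      rw [← Real.rpow_add hx0, ← Real.rpow_add hx0]
      congr 1
      ring
    have key : x ^ α * (A * x ^ (-α) * Bf x) ^ 2 = A ^ 2 * Bf x ^ 2 * x ^ (-α) := by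
      linear_combination (A ^ 2 * Bf x ^ 2) * ex
    rw [key, hCC]
    have hsq : (|L| / 2) ^ 2 ≤ Bf x ^ 2 := by
      rw [← sq_abs (Bf x)]
      apply pow_le_pow_left₀ (by positivity) hBx.le
    have hxneg : (0 : ℝ) ≤ x ^ (-α) := (Real.rpow_pos_of_pos hx0 _).le
    calc A ^ 2 * (|L| / 2) ^ 2 * x ^ (-α)
        ≤ A ^ 2 * Bf x ^ 2 * x ^ (-α) := by
          apply mul_le_mul_of_nonneg_right _ hxneg
          exact mul_le_mul_of_nonneg_left hsq (sq_nonneg A)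
      _ = A ^ 2 * Bf x ^ 2 * x ^ (-α) := rfl
  -- the lower-bound integral is infinite
  have hinf : (∫⁻ x in Ioo (0 : ℝ) δ', ENNReal.ofReal (CC * x ^ (-α))) = ⊤ := by
    by_contra hfin
    have hlt : (∫⁻ x in Ioo (0 : ℝ) δ', ENNReal.ofReal (CC * x ^ (-α))) < ⊤ :=
      lt_top_iff_ne_top.2 hfin
    have h0le : 0 ≤ᵐ[volume.restrict (Ioo (0 : ℝ) δ')] fun x => CC * x ^ (-α) := by
      refine (ae_restrict_mem measurableSet_Ioo).mono fun x hx => ?_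
      have := Real.rpow_pos_of_pos hx.1 (-α)
      show (0 : ℝ) ≤ CC * x ^ (-α)
      positivity
    have hcont : ContinuousOn (fun x : ℝ => CC * x ^ (-α)) (Ioo (0 : ℝ) δ') := by
      intro x hx
      exact ((Real.continuousAt_rpow_const x (-α) (Or.inl hx.1.ne')).const_smul CC).continuousWithinAt
    have hmeas : AEStronglyMeasurable (fun x : ℝ => CC * x ^ (-α))
        (volume.restrict (Ioo (0 : ℝ) δ')) :=
      hcont.aestronglyMeasurable measurableSet_Ioo
    have hint : IntegrableOn (fun x : ℝ => CC * x ^ (-α)) (Ioo (0 : ℝ) δ') volume :=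
      ⟨hmeas, (hasFiniteIntegral_iff_ofReal h0le).2 hlt⟩
    have hint2 : IntegrableOn (fun x : ℝ => x ^ (-α)) (Ioo (0 : ℝ) δ') volume := by
      have := hint.const_mul CC⁻¹
      have heq : (fun x : ℝ => CC⁻¹ * (CC * x ^ (-α))) = fun x : ℝ => x ^ (-α) := by
        funext x
        rw [← mul_assoc, inv_mul_cancel₀ hCC0.ne', one_mul]
      rwa [heq] at this
    rw [intervalIntegral.integrableOn_Ioo_rpow_iff hδ'0] at hint2
    linarith
  -- conclude part 1
  have main : (∫⁻ x in Ioo (0 : ℝ) 1, ENNReal.ofReal (x ^ α * (deriv Φm x) ^ 2)) = ⊤ := by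
    rw [eq_top_iff, ← hinf]
    calc (∫⁻ x in Ioo (0 : ℝ) δ', ENNReal.ofReal (CC * x ^ (-α)))
        ≤ ∫⁻ x in Ioo (0 : ℝ) δ', ENNReal.ofReal (x ^ α * (deriv Φm x) ^ 2) := by
          apply lintegral_mono_ae
          rw [ae_restrict_iff' measurableSet_Ioo]
          exact ae_of_all _ fun x hx => ENNReal.ofReal_le_ofReal (hbound x hx)
      _ ≤ ∫⁻ x in Ioo (0 : ℝ) 1, ENNReal.ofReal (x ^ α * (deriv Φm x) ^ 2) := by
          apply lintegral_mono'
          · exact Measure.restrict_mono (Ioo_subset_Ioo le_rfl (min_le_right δ 1)) le_rfl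
          · exact le_rfl
  refine ⟨main, fun hInt => ?_⟩
  have hfin := hInt.2
  rw [HasFiniteIntegral] at hfin
  have : (∫⁻ x in Ioo (0 : ℝ) 1, ENNReal.ofReal (x ^ α * (deriv Φm x) ^ 2)) ≤
      ∫⁻ x in Ioo (0 : ℝ) 1, (‖x ^ α * (deriv Φm x) ^ 2‖₊ : ENNReal) := by
    apply lintegral_mono
    intro x
    exact (ENNReal.ofReal_le_ofReal (le_abs_self _)).trans_eq
      (Real.enorm_eq_ofReal_abs _).symm
  rw [main] at this
  exact (lt_irrefl ⊤ (lt_of_le_of_lt this hfin)).elim
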